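/- Let f: T → X be order-Henstock integrable. Then there exist an (o)-sequence (b_n) and gages (γ_n) such that for every n and every partition Π = {(E, τ_E)} with alternative tags τ′_E, satisfying E ⊆ γ_n(τ_E) and E ⊆ γ_n(τ′_E) for all E, one has Σ_{E∈Π} |f(τ_E)μ(E) − f(τ′_E)μ(E)| ≤ b_n. -/

import Mathlib

open MeasureTheory Set Filter

/-- A tagged partition of the set `A`: finitely many pairwise disjoint measurable
sets covering `A`, each with a tag point. -/
structure TaggedPart (T : Type*) [MeasurableSpace T] (A : Set T) where
  k : ℕ
  E : Fin k → Set T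
  tag : Fin k → T
  meas : ∀ i, MeasurableSet (E i)
  disj : ∀ i j, i ≠ j → Disjoint (E i) (E j)
  cover : (⋃ i, E i) = A

namespace TaggedPart

variable {T : Type*} [MeasurableSpace T] {A : Set T}

/-- A Henstock partition: each tag belongs to its set. -/
def IsHenstock (P : TaggedPart T A) : Prop := ∀ i, P.tag i ∈ P.E i

/-- `γ`-fineness: each set is within distance `γ (tag)` of its tag. -/
def IsFine [PseudoMetricSpace T] (γ : T → ℝ) (P : TaggedPart T A) : Prop :=
  ∀ i, ∀ w ∈ P.E i, dist w (P.tag i) < γ (P.tag i)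

/-- The Riemann sum `σ(f, P) = ∑ μ(Eᵢ) • f(tᵢ)`. -/
noncomputable def sum {X : Type*} [AddCommMonoid X] [Module ℝ X]
    (P : TaggedPart T A) (f : T → X) (μ : Measure T) : X :=
  ∑ i, (μ (P.E i)).toReal • f (P.tag i)

end TaggedPart

/-- A gage is a strictly positive function. -/
def IsGage {T : Type*} (γ : T → ℝ) : Prop := ∀ t, 0 < γ t

/-- An (o)-sequence: decreasing with infimum `0`. -/
def IsOSeq {X : Type*} [Lattice X] [AddCommGroup X] (b : ℕ → X) : Prop :=
  Antitone b ∧ IsGLB (Set.range b) 0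

section Defs

variable {T : Type*} [MeasurableSpace T] [PseudoMetricSpace T]
  {X : Type*} [NormedAddCommGroup X] [Lattice X] [HasSolidNorm X] [IsOrderedAddMonoid X] [NormedSpace ℝ X]

/-- Order-Henstock integrability of `f` on `A` with integral `J`. -/
def HasOHIntegralOn (f : T → X) (μ : Measure T) (A : Set T) (J : X) : Prop :=
  ∃ b : ℕ → X, IsOSeq b ∧ ∃ γ : ℕ → T → ℝ, (∀ n, IsGage (γ n)) ∧
    ∀ n (P : TaggedPart T A), P.IsHenstock → P.IsFine (γ n) →
      |P.sum f μ - J| ≤ b n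

/-- Order-McShane (free partition) integrability of `f` on `A` with integral `J`. -/
def HasOMIntegralOn (f : T → X) (μ : Measure T) (A : Set T) (J : X) : Prop :=
  ∃ b : ℕ → X, IsOSeq b ∧ ∃ γ : ℕ → T → ℝ, (∀ n, IsGage (γ n)) ∧
    ∀ n (P : TaggedPart T A), P.IsFine (γ n) → |P.sum f μ - J| ≤ b n

/-- Order-McShane integrability with a prescribed regulating (o)-sequence `b`. -/
def HasOMIntegralOnWith (f : T → X) (μ : Measure T) (A : Set T) (J : X)
    (b : ℕ → X) : Prop :=
  ∃ γ : ℕ → T → ℝ, (∀ n, IsGage (γ n)) ∧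
    ∀ n (P : TaggedPart T A), P.IsFine (γ n) → |P.sum f μ - J| ≤ b n

/-- Norm-Henstock integrability of `f` on `A` with integral `J`. -/
def HasNormHIntegralOn (f : T → X) (μ : Measure T) (A : Set T) (J : X) : Prop :=
  ∀ ε : ℝ, 0 < ε → ∃ γ : T → ℝ, IsGage γ ∧
    ∀ P : TaggedPart T A, P.IsHenstock → P.IsFine γ → ‖P.sum f μ - J‖ ≤ ε

/-- Norm-McShane (free partition) integrability of `f` on `A` with integral `J`. -/
def HasNormMIntegralOn (f : T → X) (μ : Measure T) (A : Set T) (J : X) : Prop :=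
  ∀ ε : ℝ, 0 < ε → ∃ γ : T → ℝ, IsGage γ ∧
    ∀ P : TaggedPart T A, P.IsFine γ → ‖P.sum f μ - J‖ ≤ ε

end Defs


-- ===== auxiliary machinery =====
section Aux

lemma sum_abs_le_of_signed {X : Type*} [NormedAddCommGroup X] [Lattice X] [HasSolidNorm X] [IsOrderedAddMonoid X]
    {ι : Type*} [DecidableEq ι] (s : Finset ι) (d : ι → X) (c : X)
    (h : ∀ ε : ι → Bool, ∑ i ∈ s, (if ε i then d i else -d i) ≤ c) :
    ∑ i ∈ s, |d i| ≤ c := by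
  induction s using Finset.cons_induction generalizing c with
  | empty => simpa using h (fun _ => true)
  | cons a s ha ih =>
    rw [Finset.sum_cons]
    have key : ∀ (v : Bool), (if v then d a else -d a) + ∑ i ∈ s, |d i| ≤ c := by
      intro v
      have h2 : ∑ i ∈ s, |d i| ≤ c - (if v then d a else -d a) := by
        refine ih _ (fun ε => ?_)
        have := h (Function.update ε a v)
        rw [Finset.sum_cons, Function.update_self] at this
        have heq : ∑ i ∈ s, (if Function.update ε a v i then d i else -d i)
            = ∑ i ∈ s, (if ε i then d i else -d i) := by
          refine Finset.sum_congr rfl (fun i hi => ?_)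
          rw [Function.update_of_ne (by rintro rfl; exact ha hi)]
        rw [heq] at this
        exact le_sub_iff_add_le.mpr (by rwa [add_comm])
      exact add_le_of_le_sub_left h2
    have habs : |d a| = d a ⊔ -d a := by rw [abs]
    rw [habs, sup_add]
    exact sup_le (by simpa using key true) (by simpa using key false)

lemma lat_abs_sum_le {X : Type*} [NormedAddCommGroup X] [Lattice X] [HasSolidNorm X] [IsOrderedAddMonoid X]
    {ι : Type*} (s : Finset ι) (g : ι → X) :
    |∑ i ∈ s, g i| ≤ ∑ i ∈ s, |g i| := by
  induction s using Finset.cons_induction with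
  | empty => simp
  | cons a s ha ih =>
    rw [Finset.sum_cons, Finset.sum_cons]
    exact (abs_add_le (g a) (∑ i ∈ s, g i)).trans (add_le_add_right ih _)

section OSeqAux
variable {X : Type*} [NormedAddCommGroup X] [Lattice X] [HasSolidNorm X] [IsOrderedAddMonoid X]

lemma oseq_nonneg {b : ℕ → X} (hb : IsOSeq b) (n : ℕ) : 0 ≤ b n :=
  hb.2.1 ⟨n, rfl⟩

lemma le_zero_of_le_nsmul {b : ℕ → X} (hb : IsOSeq b) (C : ℕ) :
    ∀ x : X, (∀ n, x ≤ C • b n) → x ≤ 0 := by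
  induction C with
  | zero => intro x hx; simpa using hx 0
  | succ C ih =>
    intro x hx
    have step : ∀ m, x ≤ C • b m := by
      intro m
      have h1 : ∀ n, x - C • b m ≤ b n := by
        intro n
        rcases le_total m n with hmn | hnm
        · have h2 : x ≤ C • b m + b n := by
            calc x ≤ (C+1) • b n := hx n
            _ = C • b n + b n := by rw [succ_nsmul]
            _ ≤ C • b m + b n := add_le_add_left (nsmul_le_nsmul_right (hb.1 hmn) C) _
          exact sub_le_iff_le_add'.mpr h2
        · have h2 : x - C • b m ≤ b m := by
            have := hx m
            rw [succ_nsmul] at this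
            exact sub_le_iff_le_add'.mpr this
          exact h2.trans (hb.1 hnm)
      have hle := hb.2.2 (fun y hy => by rcases hy with ⟨n, rfl⟩; exact h1 n)
      exact sub_nonpos.mp hle
    exact ih x step

lemma IsOSeq.nsmul {b : ℕ → X} (hb : IsOSeq b) (C : ℕ) : IsOSeq (fun n => C • b n) := by
  constructor
  · intro m n h
    exact nsmul_le_nsmul_right (hb.1 h) C
  · constructor
    · rintro y ⟨n, rfl⟩
      simpa using nsmul_le_nsmul_right (oseq_nonneg hb n) C
    · intro x hx
      exact le_zero_of_le_nsmul hb C x (fun n => hx ⟨n, rfl⟩)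
end OSeqAux

/-- Three-coloring of a finite set relative to a map without fixed points. -/
lemma three_color {T : Type*} [DecidableEq T] (q : T → T) :
    ∀ (S : Finset T), (∀ t ∈ S, q t ≠ t) →
      ∃ S₁ S₂ S₃ : Finset T, (S₁ ∪ S₂ ∪ S₃ = S) ∧
        (∀ t ∈ S₁, q t ∉ S₁) ∧ (∀ t ∈ S₂, q t ∉ S₂) ∧ (∀ t ∈ S₃, q t ∉ S₃) := by
  classical
  intro S
  induction S using Finset.strongInduction with
  | _ S ih =>
    intro hS
    rcases eq_or_ne S ∅ with rfl | hne
    · exact ⟨∅, ∅, ∅, by simp, by simp, by simp, by simp⟩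
    -- find t0 ∈ S with small incoming fiber
    have hex : ∃ t0 ∈ S, (S.filter (fun u => q u = t0)).card ≤ 1 := by
      by_contra hno
      push_neg at hno
      have hsum : (S.filter (fun u => q u ∈ S)).card
          = ∑ t ∈ S, ((S.filter (fun u => q u ∈ S)).filter (fun u => q u = t)).card :=
        Finset.card_eq_sum_card_fiberwise (fun u hu => (Finset.mem_filter.mp hu).2)
      have heq : ∀ t ∈ S, (S.filter (fun u => q u ∈ S)).filter (fun u => q u = t)
          = S.filter (fun u => q u = t) := by
        intro t ht
        ext u
        simp only [Finset.mem_filter]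
        constructor
        · rintro ⟨⟨h1, _⟩, h3⟩; exact ⟨h1, h3⟩
        · rintro ⟨h1, h2⟩; exact ⟨⟨h1, h2 ▸ ht⟩, h2⟩
      have h2S : 2 * S.card ≤ S.card := by
        calc 2 * S.card = ∑ _t ∈ S, 2 := by rw [Finset.sum_const, smul_eq_mul, mul_comm]
          _ ≤ ∑ t ∈ S, (S.filter (fun u => q u = t)).card :=
              Finset.sum_le_sum (fun t ht => hno t ht)
          _ = (S.filter (fun u => q u ∈ S)).card := by
              rw [hsum]; exact Finset.sum_congr rfl (fun t ht => by rw [heq t ht])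
          _ ≤ S.card := Finset.card_le_card (Finset.filter_subset _ _)
      have : S.card = 0 := by omega
      exact hne (Finset.card_eq_zero.mp this)
    obtain ⟨t0, ht0S, hfib⟩ := hex
    obtain ⟨A₁, A₂, A₃, hun, h1, h2, h3⟩ :=
      ih (S.erase t0) (Finset.erase_ssubset ht0S)
        (fun t ht => hS t (Finset.mem_of_mem_erase ht))
    -- make classes disjoint
    set S₁ := A₁ with hS₁
    set S₂ := A₂ \ A₁ with hS₂
    set S₃ := A₃ \ (A₁ ∪ A₂) with hS₃
    have hun' : S₁ ∪ S₂ ∪ S₃ = S.erase t0 := by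
      rw [← hun]; ext x
      simp only [Finset.mem_union, Finset.mem_sdiff, hS₁, hS₂, hS₃]; tauto
    have h1' : ∀ t ∈ S₁, q t ∉ S₁ := h1
    have h2' : ∀ t ∈ S₂, q t ∉ S₂ := fun t ht hq =>
      h2 t (Finset.mem_sdiff.mp ht).1 (Finset.mem_sdiff.mp hq).1
    have h3' : ∀ t ∈ S₃, q t ∉ S₃ := fun t ht hq =>
      h3 t (Finset.mem_sdiff.mp ht).1 (Finset.mem_sdiff.mp hq).1
    have hdisj12 : Disjoint S₁ S₂ := Finset.disjoint_sdiff
    have hdisj13 : Disjoint S₁ S₃ := Finset.disjoint_sdiff.mono_right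
      (Finset.sdiff_subset_sdiff le_rfl (Finset.subset_union_left))
    have hdisj23 : Disjoint S₂ S₃ := by
      rw [Finset.disjoint_left]
      intro a ha ha'
      exact (Finset.mem_sdiff.mp ha').2 (Finset.mem_union_right _ (Finset.mem_sdiff.mp ha).1)
    -- the conflict set
    set F := (S.erase t0).filter (fun u => q u = t0) with hF
    set C := insert (q t0) F with hC
    have hCcard : C.card ≤ 2 := by
      have hFcard : F.card ≤ 1 :=
        le_trans (Finset.card_le_card (by
          intro u hu
          simp only [hF, Finset.mem_filter, Finset.mem_erase] at hu
          exact Finset.mem_filter.mpr ⟨hu.1.2, hu.2⟩)) hfib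
      calc C.card ≤ F.card + 1 := Finset.card_insert_le _ _
        _ ≤ 2 := by omega
    -- find a good class
    have hgood : ∃ B₁ B₂ B₃ : Finset T, (B₁ ∪ B₂ ∪ B₃ = S.erase t0) ∧
        (B₁ ∩ C = ∅) ∧ (∀ t ∈ B₁, q t ∉ B₁) ∧ (∀ t ∈ B₂, q t ∉ B₂) ∧ (∀ t ∈ B₃, q t ∉ B₃) := by
      by_cases c1 : S₁ ∩ C = ∅
      · exact ⟨S₁, S₂, S₃, hun', c1, h1', h2', h3'⟩
      by_cases c2 : S₂ ∩ C = ∅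
      · refine ⟨S₂, S₁, S₃, ?_, c2, h2', h1', h3'⟩
        rw [← hun']; ext x; simp only [Finset.mem_union]; tauto
      by_cases c3 : S₃ ∩ C = ∅
      · refine ⟨S₃, S₁, S₂, ?_, c3, h3', h1', h2'⟩
        rw [← hun']; ext x; simp only [Finset.mem_union]; tauto
      · exfalso
        have hle : (S₁ ∩ C).card + (S₂ ∩ C).card + (S₃ ∩ C).card ≤ C.card := by
          rw [← Finset.card_union_of_disjoint (hdisj12.mono Finset.inter_subset_left
                Finset.inter_subset_left)]
          rw [← Finset.card_union_of_disjoint (by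
            refine Finset.disjoint_union_left.mpr ⟨?_, ?_⟩
            · exact hdisj13.mono Finset.inter_subset_left Finset.inter_subset_left
            · exact hdisj23.mono Finset.inter_subset_left Finset.inter_subset_left)]
          refine Finset.card_le_card ?_
          intro x hx
          simp only [Finset.mem_union, Finset.mem_inter] at hx
          tauto
        have p1 : 1 ≤ (S₁ ∩ C).card := Finset.card_pos.mpr (Finset.nonempty_iff_ne_empty.mpr c1)
        have p2 : 1 ≤ (S₂ ∩ C).card := Finset.card_pos.mpr (Finset.nonempty_iff_ne_empty.mpr c2)
        have p3 : 1 ≤ (S₃ ∩ C).card := Finset.card_pos.mpr (Finset.nonempty_iff_ne_empty.mpr c3)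
        omega
    obtain ⟨B₁, B₂, B₃, hBun, hB1C, hb1, hb2, hb3⟩ := hgood
    have hB1sub : B₁ ⊆ S.erase t0 := by
      rw [← hBun]; intro x hx
      exact Finset.mem_union_left _ (Finset.mem_union_left _ hx)
    refine ⟨insert t0 B₁, B₂, B₃, ?_, ?_, hb2, hb3⟩
    · rw [Finset.insert_union, Finset.insert_union, hBun, Finset.insert_erase ht0S]
    · intro t ht hmem
      rcases Finset.mem_insert.mp ht with heq | htB
      · subst heq
        rcases Finset.mem_insert.mp hmem with heq2 | hq
        · exact hS t ht0S heq2
        · have : q t ∈ B₁ ∩ C := Finset.mem_inter.mpr ⟨hq, Finset.mem_insert_self _ _⟩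
          rw [hB1C] at this; exact absurd this (Finset.notMem_empty _)
      · rcases Finset.mem_insert.mp hmem with heq2 | hq
        · have : t ∈ B₁ ∩ C := Finset.mem_inter.mpr ⟨htB,
            Finset.mem_insert.mpr (Or.inr (Finset.mem_filter.mpr ⟨hB1sub htB, heq2⟩))⟩
          rw [hB1C] at this; exact absurd this (Finset.notMem_empty _)
        · exact hb1 t htB hq

namespace TaggedPart
variable {T : Type*} [MeasurableSpace T] {A : Set T}

/-- Build a tagged partition from an arbitrary finite index type. -/
noncomputable def ofIndex (ι : Type*) [Fintype ι] (E : ι → Set T) (tag : ι → T)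
    (meas : ∀ i, MeasurableSet (E i)) (disj : ∀ i j, i ≠ j → Disjoint (E i) (E j))
    (cover : (⋃ i, E i) = A) : TaggedPart T A where
  k := Fintype.card ι
  E := E ∘ (Fintype.equivFin ι).symm
  tag := tag ∘ (Fintype.equivFin ι).symm
  meas := fun _ => meas _
  disj := fun i j hij => disj _ _ (fun h => hij (by
    have := congrArg (Fintype.equivFin ι) h
    simpa using this))
  cover := by
    rw [← cover]
    exact (Fintype.equivFin ι).symm.surjective.iUnion_comp (fun i => E i)

lemma ofIndex_sum {X : Type*} [AddCommMonoid X] [Module ℝ X] (ι : Type*) [Fintype ι]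
    (E : ι → Set T) (tag : ι → T) (meas) (disj) (cover) (f : T → X) (μ : Measure T) :
    (ofIndex ι E tag meas disj cover (A := A)).sum f μ
      = ∑ i : ι, (μ (E i)).toReal • f (tag i) := by
  unfold sum ofIndex
  exact Fintype.sum_equiv (Fintype.equivFin ι).symm _ _ (fun _ => rfl)

lemma ofIndex_isHenstock (ι : Type*) [Fintype ι] (E : ι → Set T) (tag : ι → T)
    (meas) (disj) (cover) (h : ∀ i, tag i ∈ E i) :
    (ofIndex ι E tag meas disj cover (A := A)).IsHenstock := fun _ => h _

lemma ofIndex_isFine [PseudoMetricSpace T] (γ : T → ℝ) (ι : Type*) [Fintype ι]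
    (E : ι → Set T) (tag : ι → T) (meas) (disj) (cover)
    (h : ∀ i, ∀ w ∈ E i, dist w (tag i) < γ (tag i)) :
    (ofIndex ι E tag meas disj cover (A := A)).IsFine γ := fun _ => h _

end TaggedPart

section Cover
variable {T : Type*} [MetricSpace T] [CompactSpace T]

lemma exists_finite_cover (γ : T → ℝ) (bad : Set T)
    (hbad : ∀ x : T, ∃ c, c ∉ bad ∧ x ∈ Metric.ball c (γ c)) :
    ∃ C : Finset T, (∀ c ∈ C, c ∉ bad) ∧
      (Set.univ : Set T) ⊆ ⋃ c ∈ C, Metric.ball c (γ c) := by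
  classical
  obtain ⟨t, ht⟩ := isCompact_univ.elim_finite_subcover
    (fun i : {c : T // c ∉ bad} => Metric.ball i.1 (γ i.1))
    (fun i => Metric.isOpen_ball)
    (by intro x _
        obtain ⟨c, hc, hx⟩ := hbad x
        exact Set.mem_iUnion.mpr ⟨⟨c, hc⟩, hx⟩)
  refine ⟨t.image Subtype.val, ?_, ?_⟩
  · intro c hc
    obtain ⟨i, _, rfl⟩ := Finset.mem_image.mp hc
    exact i.2
  · intro x hx
    obtain ⟨i, hi⟩ := Set.mem_iUnion.mp (ht hx)
    obtain ⟨hit, hxi⟩ := Set.mem_iUnion.mp hi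
    exact Set.mem_biUnion (Finset.mem_image_of_mem _ hit) hxi

/-- Disjointification of a finite family of balls. -/
def dBall (γ : T → ℝ) {M : ℕ} (c : Fin M → T) (l : Fin M) : Set T :=
  Metric.ball (c l) (γ (c l)) \ ⋃ (l' : Fin M) (_ : l' < l), Metric.ball (c l') (γ (c l'))

lemma dBall_subset (γ : T → ℝ) {M : ℕ} (c : Fin M → T) (l : Fin M) :
    dBall γ c l ⊆ Metric.ball (c l) (γ (c l)) := Set.diff_subset

lemma dBall_disjoint (γ : T → ℝ) {M : ℕ} (c : Fin M → T) {l l' : Fin M} (h : l ≠ l') :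
    Disjoint (dBall γ c l) (dBall γ c l') := by
  rcases lt_or_gt_of_ne h with hlt | hlt
  · refine Set.disjoint_left.mpr (fun x hx hx' => ?_)
    exact hx'.2 (Set.mem_iUnion.mpr ⟨l, Set.mem_iUnion.mpr ⟨hlt, hx.1⟩⟩)
  · refine Set.disjoint_left.mpr (fun x hx hx' => ?_)
    exact hx.2 (Set.mem_iUnion.mpr ⟨l', Set.mem_iUnion.mpr ⟨hlt, hx'.1⟩⟩)

lemma iUnion_dBall (γ : T → ℝ) {M : ℕ} (c : Fin M → T) :
    (⋃ l, dBall γ c l) = ⋃ l, Metric.ball (c l) (γ (c l)) := by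
  apply Set.Subset.antisymm
  · exact Set.iUnion_mono (fun l => dBall_subset γ c l)
  · intro x hx
    have hex : ∃ l : Fin M, x ∈ Metric.ball (c l) (γ (c l)) := Set.mem_iUnion.mp hx
    classical
    obtain ⟨l, hl, hmin⟩ := Finset.exists_min_image (Finset.univ.filter
      (fun l => x ∈ Metric.ball (c l) (γ (c l)))) id (by
        obtain ⟨l, hl⟩ := hex
        exact ⟨l, Finset.mem_filter.mpr ⟨Finset.mem_univ _, hl⟩⟩)
    refine Set.mem_iUnion.mpr ⟨l, (Finset.mem_filter.mp hl).2, ?_⟩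
    intro hmem
    obtain ⟨l', hl'⟩ := Set.mem_iUnion.mp hmem
    obtain ⟨hlt, hx'⟩ := Set.mem_iUnion.mp hl'
    have := hmin l' (Finset.mem_filter.mpr ⟨Finset.mem_univ _, hx'⟩)
    exact absurd hlt (not_lt.mpr this)

omit [CompactSpace T] in
lemma dBall_meas [MeasurableSpace T] [BorelSpace T] (γ : T → ℝ) {M : ℕ} (c : Fin M → T)
    (l : Fin M) : MeasurableSet (dBall γ c l) :=
  (Metric.isOpen_ball.measurableSet).diff
    (MeasurableSet.iUnion (fun _ => MeasurableSet.iUnion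
      (fun _ => Metric.isOpen_ball.measurableSet)))
end Cover

section Constructions
variable {T : Type*} [MetricSpace T] [CompactSpace T] [MeasurableSpace T] [BorelSpace T]
  (μ : Measure T) [IsFiniteMeasure μ]
  {X : Type*} [NormedAddCommGroup X] [Lattice X] [HasSolidNorm X] [IsOrderedAddMonoid X] [NormedSpace ℝ X]
  (f : T → X) (J : X) (γ : T → ℝ) (hγ : IsGage γ) (b : X)
  (hb : ∀ P : TaggedPart T (Set.univ : Set T), P.IsHenstock → P.IsFine γ →
    |P.sum f μ - J| ≤ b)

/-- measure of a finite set as a sum over singletons -/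
lemma measure_finset_eq (s : Finset T) : μ (↑s : Set T) = ∑ t ∈ s, μ {t} := by
  classical
  induction s using Finset.cons_induction with
  | empty => simp
  | cons a s ha ih =>
    rw [Finset.cons_eq_insert, Finset.sum_insert ha, Finset.coe_insert,
      Set.insert_eq, measure_union (by simpa using ha) (s.finite_toSet.measurableSet), ih]

include hγ hb in
/-- The C1 ("pair") estimate. -/
lemma pair_estimate (hbpos : 0 ≤ b) (Tset : Finset T) (q : T → T)
    (hq1 : ∀ t ∈ Tset, q t ∉ Tset) (hq2 : ∀ t ∈ Tset, dist t (q t) < γ (q t)) :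
    ∑ t ∈ Tset, |(μ {t}).toReal • (f (q t) - f t)| ≤ b + b := by
  classical
  rcases Finset.eq_empty_or_nonempty Tset with rfl | hTne
  · simpa using add_le_add hbpos hbpos
  -- a finite cover by balls whose centers avoid Tset
  obtain ⟨C0, hC0, hcov0⟩ := exists_finite_cover γ (↑Tset) (fun x => by
    by_cases hx : x ∈ Tset
    · exact ⟨q x, by simpa using hq1 x hx, by simpa [Metric.mem_ball] using hq2 x hx⟩
    · exact ⟨x, by simpa using hx, Metric.mem_ball_self (hγ x)⟩)
  set C' : Finset T := C0 ∪ Tset.image q with hC'def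
  have hC'T : ∀ c ∈ C', c ∉ Tset := by
    intro c hc
    rcases Finset.mem_union.mp hc with h | h
    · exact hC0 c h
    · obtain ⟨t, ht, rfl⟩ := Finset.mem_image.mp h
      exact hq1 t ht
  have hqC' : ∀ t ∈ Tset, q t ∈ C' :=
    fun t ht => Finset.mem_union.mpr (Or.inr (Finset.mem_image_of_mem q ht))
  set M := C'.card with hM
  set e := C'.equivFin with he
  set c : Fin M → T := fun l => (e.symm l : T) with hcdef
  have hcinj : Function.Injective c := fun l l' h => e.symm.injective (Subtype.ext h)
  have hcmem : ∀ l, c l ∈ C' := fun l => (e.symm l).2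
  have hcsurj : ∀ x ∈ C', ∃ l, c l = x := fun x hx => ⟨e ⟨x, hx⟩, by simp [hcdef]⟩
  have hMpos : 0 < M :=
    Finset.card_pos.mpr ⟨q hTne.choose, hqC' _ hTne.choose_spec⟩
  set lIndex : T → Fin M := fun t => if h : q t ∈ C' then e ⟨q t, h⟩ else ⟨0, hMpos⟩
    with hlIdef
  have hlIndex : ∀ t ∈ Tset, c (lIndex t) = q t := by
    intro t ht
    simp only [hlIdef, dif_pos (hqC' t ht), hcdef, Equiv.symm_apply_apply]
  -- the pieces
  set core : Fin M → Set T := fun l => {c l} ∪ (dBall γ c l \ (↑C' ∪ ↑Tset))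
    with hcore
  have hcoreT : ∀ l, ∀ x ∈ core l, x ∉ Tset := by
    intro l x hx
    rcases hx with hx | hx
    · rw [Set.mem_singleton_iff] at hx
      subst hx; exact hC'T _ (hcmem l)
    · exact fun hT => hx.2 (Set.mem_union_right _ hT)
  have hcore_meas : ∀ l, MeasurableSet (core l) :=
    fun l => (measurableSet_singleton _).union
      ((dBall_meas γ c l).diff ((C'.finite_toSet.union Tset.finite_toSet).measurableSet))
  set att : (T → Bool) → Fin M → Finset T :=
    fun δ l => Tset.filter (fun t => δ t ∧ q t = c l) with hatt
  -- the key: for each boolean choice δ there is a Henstock fine partition whose sum is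
  --   K + ∑_{t ∈ Tset} μ{t} • (if δ t then f (q t) else f t)
  set K : X := ∑ l, (μ (core l)).toReal • f (c l) with hK
  have hσ : ∀ δ : T → Bool,
      |(K + ∑ t ∈ Tset, (μ {t}).toReal • (if δ t then f (q t) else f t)) - J| ≤ b := by
    intro δ
    set ι := (Fin M ⊕ ↥(Tset.filter (fun t => δ t = false))) with hι
    set Ep : ι → Set T := fun i => Sum.rec (fun l => core l ∪ ↑(att δ l))
      (fun t => {(t : T)}) i with hEp
    set tg : ι → T := fun i => Sum.rec (fun l => c l) (fun t => (t : T)) i with htg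
    have hattT : ∀ l, ∀ x ∈ att δ l, x ∈ Tset := fun l x hx => (Finset.mem_filter.mp hx).1
    have meas : ∀ i, MeasurableSet (Ep i) := by
      rintro (l | t)
      · exact (hcore_meas l).union ((att δ l).finite_toSet.measurableSet)
      · exact measurableSet_singleton _
    have disj : ∀ i j, i ≠ j → Disjoint (Ep i) (Ep j) := by
      have main : ∀ l l' : Fin M, l ≠ l' → ∀ x, x ∈ Ep (Sum.inl l) → x ∈ Ep (Sum.inl l') → False := by
        intro l l' hll x hx hx'
        rcases hx with hx | hx
        · rcases hx with hx | hx
          · rw [Set.mem_singleton_iff] at hx; subst hx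
            rcases hx' with hx' | hx'
            · rcases hx' with hx' | hx'
              · exact hll (hcinj hx')
              · exact hx'.2 (Set.mem_union_left _ (hcmem l))
            · exact hC'T _ (hcmem l) (hattT l' _ hx')
          · rcases hx' with hx' | hx'
            · rcases hx' with hx' | hx'
              · rw [Set.mem_singleton_iff] at hx'; subst hx'
                exact hx.2 (Set.mem_union_left _ (hcmem l'))
              · exact Set.disjoint_left.mp (dBall_disjoint γ c hll) hx.1 hx'.1
            · exact hx.2 (Set.mem_union_right _ (hattT l' _ hx'))
        · rcases hx' with hx' | hx'
          · rcases hx' with hx' | hx'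
            · rw [Set.mem_singleton_iff] at hx'; subst hx'
              exact hC'T _ (hcmem l') (hattT l _ hx)
            · exact hx'.2 (Set.mem_union_right _ (hattT l _ hx))
          · have h1 := (Finset.mem_filter.mp hx).2.2
            have h2 := (Finset.mem_filter.mp hx').2.2
            exact hll (hcinj (h1 ▸ h2 ▸ rfl : c l = c l'))
      have sing : ∀ (l : Fin M) (t : ↥(Tset.filter (fun t => δ t = false))),
          ((t : T)) ∉ Ep (Sum.inl l) := by
        intro l t ht
        have htT : (t : T) ∈ Tset := (Finset.mem_filter.mp t.2).1
        have htδ : δ (t : T) = false := (Finset.mem_filter.mp t.2).2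
        rcases ht with ht | ht
        · exact hcoreT l _ ht htT
        · have := (Finset.mem_filter.mp ht).2.1
          rw [htδ] at this; exact Bool.false_ne_true this
      rintro (l | t) (l' | t') hij
      · exact Set.disjoint_left.mpr (fun x hx hx' =>
          main l l' (fun h => hij (by rw [h])) x hx hx')
      · exact Set.disjoint_right.mpr (fun x hx => by
          rw [Set.mem_singleton_iff] at hx; subst hx; exact sing l t')
      · exact Set.disjoint_left.mpr (fun x hx => by
          rw [Set.mem_singleton_iff] at hx; subst hx; exact sing l' t)
      · refine Set.disjoint_left.mpr (fun x hx hx' => ?_)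
        rw [Set.mem_singleton_iff] at hx hx'
        exact hij (by subst hx; exact congrArg Sum.inr (Subtype.ext hx'.symm) ▸ rfl)
    have cover : (⋃ i, Ep i) = Set.univ := by
      apply Set.eq_univ_of_forall
      intro x
      by_cases hxT : x ∈ Tset
      · rcases Bool.eq_false_or_eq_true (δ x) with hδ | hδ
        · refine Set.mem_iUnion.mpr ⟨Sum.inl (lIndex x), Set.mem_union_right _ ?_⟩
          exact Finset.mem_coe.mpr (Finset.mem_filter.mpr ⟨hxT, ⟨hδ, (hlIndex x hxT).symm⟩⟩)
        · exact Set.mem_iUnion.mpr ⟨Sum.inr ⟨x, Finset.mem_filter.mpr ⟨hxT, hδ⟩⟩, rfl⟩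
      · by_cases hxC : x ∈ C'
        · obtain ⟨l, rfl⟩ := hcsurj x hxC
          exact Set.mem_iUnion.mpr ⟨Sum.inl l, Set.mem_union_left _ (Set.mem_union_left _ rfl)⟩
        · have hxball : x ∈ ⋃ l, Metric.ball (c l) (γ (c l)) := by
            have hx0 := hcov0 (Set.mem_univ x)
            obtain ⟨c0, hc0C, hxc0⟩ := Set.mem_iUnion₂.mp hx0
            obtain ⟨l, rfl⟩ := hcsurj c0 (Finset.mem_union.mpr (Or.inl hc0C))
            exact Set.mem_iUnion.mpr ⟨l, hxc0⟩
          rw [← iUnion_dBall] at hxball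
          obtain ⟨l, hl⟩ := Set.mem_iUnion.mp hxball
          refine Set.mem_iUnion.mpr ⟨Sum.inl l,
            Set.mem_union_left _ (Set.mem_union_right _ ⟨hl, ?_⟩)⟩
          intro hmem
          rcases hmem with h | h
          · exact hxC (Finset.mem_coe.mp h)
          · exact hxT (Finset.mem_coe.mp h)
    set P := TaggedPart.ofIndex ι Ep tg meas disj cover with hP
    have hHen : P.IsHenstock := TaggedPart.ofIndex_isHenstock _ _ _ _ _ _ (by
      rintro (l | t)
      · exact Set.mem_union_left _ (Set.mem_union_left _ rfl)
      · exact rfl)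
    have hFine : P.IsFine γ := TaggedPart.ofIndex_isFine γ _ _ _ _ _ _ (by
      rintro (l | t) w hw
      · rcases hw with hw | hw
        · rcases hw with hw | hw
          · rw [Set.mem_singleton_iff] at hw; subst hw
            simpa [htg] using hγ (c l)
          · simpa [htg] using Metric.mem_ball.mp (dBall_subset γ c l hw.1)
        · obtain ⟨hwT, hwδ, hwq⟩ := Finset.mem_filter.mp hw
          have := hq2 w hwT
          rw [hwq] at this
          simpa [htg] using this
      · rw [Set.mem_singleton_iff] at hw; subst hw
        simpa [htg] using hγ (t : T))
    have hsum : P.sum f μ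
        = K + ∑ t ∈ Tset, (μ {t}).toReal • (if δ t then f (q t) else f t) := by
      rw [hP, TaggedPart.ofIndex_sum]
      rw [Fintype.sum_sum_type]
      have hinl : ∀ l : Fin M, (μ (Ep (Sum.inl l))).toReal • f (tg (Sum.inl l))
          = (μ (core l)).toReal • f (c l)
            + ∑ t ∈ att δ l, (μ {t}).toReal • f (c l) := by
        intro l
        have hdisj : Disjoint (core l) (↑(att δ l) : Set T) :=
          Set.disjoint_left.mpr (fun x hx hx' => hcoreT l x hx (hattT l x hx'))
        have : μ (Ep (Sum.inl l)) = μ (core l) + μ (↑(att δ l)) := by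
          simp only [hEp]
          exact measure_union hdisj ((att δ l).finite_toSet.measurableSet)
        rw [this, ENNReal.toReal_add (measure_ne_top μ _) (measure_ne_top μ _), add_smul,
          measure_finset_eq, ENNReal.toReal_sum (fun _ _ => measure_ne_top μ _),
          Finset.sum_smul]
      rw [Finset.sum_congr rfl (fun l _ => hinl l), Finset.sum_add_distrib]
      have hmid : ∑ l : Fin M, ∑ t ∈ att δ l, (μ {t}).toReal • f (c l)
          = ∑ t ∈ Tset.filter (fun t => δ t = true), (μ {t}).toReal • f (q t) := by
        have hfib : ∀ l, att δ l
            = (Tset.filter (fun t => δ t = true)).filter (fun t => lIndex t = l) := by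
          intro l
          ext t
          simp only [hatt, Finset.mem_filter, Finset.filter_filter]
          constructor
          · rintro ⟨ht, hδt, hq⟩
            refine ⟨ht, hδt, ?_⟩
            apply hcinj
            rw [hlIndex t ht, hq]
          · rintro ⟨ht, hδt, hl⟩
            exact ⟨ht, hδt, by rw [← hl, hlIndex t ht]⟩
        calc ∑ l : Fin M, ∑ t ∈ att δ l, (μ {t}).toReal • f (c l)
            = ∑ l : Fin M, ∑ t ∈ (Tset.filter (fun t => δ t = true)).filter
                (fun t => lIndex t = l), (μ {t}).toReal • f (q t) := by
              refine Finset.sum_congr rfl (fun l _ => ?_)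
              rw [← hfib l]
              refine Finset.sum_congr rfl (fun t ht => ?_)
              rw [(Finset.mem_filter.mp ht).2.2]
          _ = ∑ t ∈ Tset.filter (fun t => δ t = true), (μ {t}).toReal • f (q t) := by
              rw [← Finset.sum_fiberwise_of_maps_to (g := lIndex)
                (fun t _ => Finset.mem_univ _) _]
      have hend : ∑ t : ↥(Tset.filter (fun t => δ t = false)),
          (μ (Ep (Sum.inr t))).toReal • f (tg (Sum.inr t))
          = ∑ t ∈ Tset.filter (fun t => δ t = false), (μ {t}).toReal • f t := by
        rw [← Finset.sum_coe_sort (Tset.filter (fun t => δ t = false))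
          (fun t => (μ {t}).toReal • f t)]
      rw [hmid, hend, ← hK, add_assoc]
      congr 1
      rw [← Finset.sum_filter_add_sum_filter_not Tset (fun t => δ t = true)]
      congr 1
      · exact Finset.sum_congr rfl (fun t ht => by
          rw [if_pos (Finset.mem_filter.mp ht).2])
      · have : Tset.filter (fun t => ¬ (δ t = true)) = Tset.filter (fun t => δ t = false) := by
          simp
        rw [this]
        exact Finset.sum_congr rfl (fun t ht => by
          rw [if_neg (by simp [(Finset.mem_filter.mp ht).2])])
    rw [← hsum]
    exact hb P hHen hFine
  -- now derive the signed-sum bound and conclude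
  refine sum_abs_le_of_signed Tset _ _ (fun ε => ?_)
  have h1 := hσ ε
  have h2 := hσ (fun t => !(ε t))
  set σ1 := K + ∑ t ∈ Tset, (μ {t}).toReal • (if ε t then f (q t) else f t) with hσ1
  set σ2 := K + ∑ t ∈ Tset, (μ {t}).toReal • (if !(ε t) then f (q t) else f t) with hσ2
  have hdiff : σ1 - σ2 = ∑ t ∈ Tset,
      (if ε t then (μ {t}).toReal • (f (q t) - f t) else -((μ {t}).toReal • (f (q t) - f t))) := by
    rw [hσ1, hσ2]
    rw [add_sub_add_left_eq_sub, ← Finset.sum_sub_distrib]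
    refine Finset.sum_congr rfl (fun t _ => ?_)
    rcases Bool.eq_false_or_eq_true (ε t) with hε | hε <;>
      simp [hε, smul_sub, neg_sub]
  calc ∑ t ∈ Tset, (if ε t then (μ {t}).toReal • (f (q t) - f t)
        else -((μ {t}).toReal • (f (q t) - f t)))
      = σ1 - σ2 := hdiff.symm
    _ = (σ1 - J) - (σ2 - J) := by abel
    _ = (σ1 - J) + (-(σ2 - J)) := by abel
    _ ≤ |σ1 - J| + |σ2 - J| := add_le_add (le_abs_self _) (neg_le_abs _)
    _ ≤ b + b := add_le_add h1 h2

include hγ hb in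
/-- The main (Q') estimate: two-tag sums with the tag-point set removed. -/
lemma main_estimate (P : TaggedPart T (Set.univ : Set T)) (τ' : Fin P.k → T)
    (h1 : P.IsFine γ) (h2 : ∀ i, ∀ w ∈ P.E i, dist w (τ' i) < γ (τ' i))
    (Tags : Finset T) (hτT : ∀ i, P.tag i ∈ Tags) (hτ'T : ∀ i, τ' i ∈ Tags) :
    ∑ i, |(μ (P.E i \ ↑Tags)).toReal • (f (P.tag i) - f (τ' i))| ≤ b + b := by
  classical
  set D : Fin P.k → Set T := fun i => P.E i \ ↑Tags with hD
  have hDmeas : ∀ i, MeasurableSet (D i) :=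
    fun i => (P.meas i).diff Tags.finite_toSet.measurableSet
  set A : X := ∑ s ∈ Tags, (μ {s}).toReal • f s with hA
  have hσ : ∀ θ : Fin P.k → T, (∀ i, θ i ∈ Tags) →
      (∀ i, ∀ w ∈ P.E i, dist w (θ i) < γ (θ i)) →
      |(A + ∑ i, (μ (D i)).toReal • f (θ i)) - J| ≤ b := by
    intro θ hθT hθf
    set F : ↥Tags → Set T := fun s =>
      {(s : T)} ∪ ⋃ i ∈ Finset.univ.filter (fun i => θ i = (s : T)), D i with hF
    have hDTags : ∀ i, ∀ x ∈ D i, x ∉ Tags := fun i x hx => fun h => hx.2 (Finset.mem_coe.mpr h)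
    have meas : ∀ s, MeasurableSet (F s) := by
      intro s
      exact (measurableSet_singleton _).union
        (MeasurableSet.biUnion (Finset.univ.filter _).countable_toSet (fun i _ => hDmeas i))
    have disj : ∀ s s', s ≠ s' → Disjoint (F s) (F s') := by
      intro s s' hss
      refine Set.disjoint_left.mpr (fun x hx hx' => ?_)
      rcases hx with hx | hx
      · rw [Set.mem_singleton_iff] at hx; subst hx
        rcases hx' with hx' | hx'
        · rw [Set.mem_singleton_iff] at hx'
          exact hss (Subtype.ext hx')
        · obtain ⟨i, _, hxi⟩ := Set.mem_iUnion₂.mp hx'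
          exact hDTags i _ hxi s.2
      · obtain ⟨i, hif, hxi⟩ := Set.mem_iUnion₂.mp hx
        rcases hx' with hx' | hx'
        · rw [Set.mem_singleton_iff] at hx'; subst hx'
          exact hDTags i _ hxi s'.2
        · obtain ⟨j, hjf, hxj⟩ := Set.mem_iUnion₂.mp hx'
          have hij : i ≠ j := by
            rintro rfl
            exact hss (Subtype.ext (((Finset.mem_filter.mp hif).2.symm).trans
              (Finset.mem_filter.mp hjf).2))
          exact Set.disjoint_left.mp (P.disj i j hij) hxi.1 hxj.1
    have cover : (⋃ s, F s) = Set.univ := by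
      apply Set.eq_univ_of_forall
      intro x
      by_cases hxT : x ∈ Tags
      · exact Set.mem_iUnion.mpr ⟨⟨x, hxT⟩, Or.inl rfl⟩
      · have : x ∈ ⋃ i, P.E i := by rw [P.cover]; trivial
        obtain ⟨i, hi⟩ := Set.mem_iUnion.mp this
        refine Set.mem_iUnion.mpr ⟨⟨θ i, hθT i⟩, Or.inr ?_⟩
        exact Set.mem_iUnion₂.mpr ⟨i, Finset.mem_filter.mpr ⟨Finset.mem_univ _, rfl⟩,
          ⟨hi, fun h => hxT (Finset.mem_coe.mp h)⟩⟩
    set Q := TaggedPart.ofIndex ↥Tags F (fun s => (s : T)) meas disj cover with hQ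
    have hHen : Q.IsHenstock :=
      TaggedPart.ofIndex_isHenstock _ _ _ _ _ _ (fun s => Or.inl rfl)
    have hFine : Q.IsFine γ := TaggedPart.ofIndex_isFine γ _ _ _ _ _ _ (by
      intro s w hw
      rcases hw with hw | hw
      · rw [Set.mem_singleton_iff] at hw; subst hw
        simpa using hγ (s : T)
      · obtain ⟨i, hif, hxi⟩ := Set.mem_iUnion₂.mp hw
        have := hθf i w hxi.1
        rwa [(Finset.mem_filter.mp hif).2] at this)
    have hsum : Q.sum f μ = A + ∑ i, (μ (D i)).toReal • f (θ i) := by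
      rw [hQ, TaggedPart.ofIndex_sum]
      have hμF : ∀ s : ↥Tags, (μ (F s)).toReal
          = (μ {(s : T)}).toReal
            + ∑ i ∈ Finset.univ.filter (fun i => θ i = (s : T)), (μ (D i)).toReal := by
        intro s
        have hd : Disjoint ({(s : T)} : Set T)
            (⋃ i ∈ Finset.univ.filter (fun i => θ i = (s : T)), D i) := by
          refine Set.disjoint_left.mpr (fun x hx hx' => ?_)
          rw [Set.mem_singleton_iff] at hx; subst hx
          obtain ⟨i, _, hxi⟩ := Set.mem_iUnion₂.mp hx'
          exact hDTags i _ hxi s.2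
        have hmu : μ (F s) = μ {(s : T)}
            + μ (⋃ i ∈ Finset.univ.filter (fun i => θ i = (s : T)), D i) := by
          rw [hF]
          exact measure_union hd (MeasurableSet.biUnion
            ((Finset.univ.filter _)).countable_toSet (fun i _ => hDmeas i))
        have hbu : μ (⋃ i ∈ Finset.univ.filter (fun i => θ i = (s : T)), D i)
            = ∑ i ∈ Finset.univ.filter (fun i => θ i = (s : T)), μ (D i) := by
          refine measure_biUnion_finset ?_ (fun i _ => hDmeas i)
          intro i hi j hj hij
          exact Set.disjoint_of_subset Set.diff_subset Set.diff_subset (P.disj i j hij)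
        rw [hmu, ENNReal.toReal_add (measure_ne_top μ _) (measure_ne_top μ _), hbu,
          ENNReal.toReal_sum (fun _ _ => measure_ne_top μ _)]
      calc ∑ s : ↥Tags, (μ (F s)).toReal • f (s : T)
          = ∑ s : ↥Tags, ((μ {(s : T)}).toReal • f (s : T)
            + ∑ i ∈ Finset.univ.filter (fun i => θ i = (s : T)),
                (μ (D i)).toReal • f (θ i)) := by
            refine Finset.sum_congr rfl (fun s _ => ?_)
            rw [hμF s, add_smul, Finset.sum_smul]
            congr 1
            refine Finset.sum_congr rfl (fun i hi => ?_)
            rw [(Finset.mem_filter.mp hi).2]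
        _ = A + ∑ i, (μ (D i)).toReal • f (θ i) := by
            rw [Finset.sum_add_distrib]
            congr 1
            · rw [hA, ← Finset.sum_coe_sort Tags (fun s => (μ {s}).toReal • f s)]
            · have := Finset.sum_fiberwise_of_maps_to
                (s := (Finset.univ : Finset (Fin P.k)))
                (t := (Finset.univ : Finset ↥Tags))
                (g := fun i => (⟨θ i, hθT i⟩ : ↥Tags))
                (fun i _ => Finset.mem_univ _)
                (fun i => (μ (D i)).toReal • f (θ i))
              rw [← this]
              refine Finset.sum_congr rfl (fun s _ => ?_)
              refine Finset.sum_congr ?_ (fun i _ => rfl)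
              ext i
              simp only [Finset.mem_filter, Finset.mem_univ, true_and]
              constructor
              · intro h; exact Subtype.ext h
              · intro h; exact congrArg Subtype.val h
    rw [← hsum]
    exact hb Q hHen hFine
  -- signed sums
  have key : ∀ ε : Fin P.k → Bool,
      ∑ i, (if ε i then (μ (D i)).toReal • (f (P.tag i) - f (τ' i))
        else -((μ (D i)).toReal • (f (P.tag i) - f (τ' i)))) ≤ b + b := by
    intro ε
    set θ₁ : Fin P.k → T := fun i => if ε i then P.tag i else τ' i with hθ₁
    set θ₂ : Fin P.k → T := fun i => if ε i then τ' i else P.tag i with hθ₂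
    have hθ₁T : ∀ i, θ₁ i ∈ Tags := fun i => by
      rw [hθ₁]; dsimp only; split <;> [exact hτT i; exact hτ'T i]
    have hθ₂T : ∀ i, θ₂ i ∈ Tags := fun i => by
      rw [hθ₂]; dsimp only; split <;> [exact hτ'T i; exact hτT i]
    have hθ₁f : ∀ i, ∀ w ∈ P.E i, dist w (θ₁ i) < γ (θ₁ i) := fun i w hw => by
      rw [hθ₁]; dsimp only; split <;> [exact h1 i w hw; exact h2 i w hw]
    have hθ₂f : ∀ i, ∀ w ∈ P.E i, dist w (θ₂ i) < γ (θ₂ i) := fun i w hw => by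
      rw [hθ₂]; dsimp only; split <;> [exact h2 i w hw; exact h1 i w hw]
    have hb1 := hσ θ₁ hθ₁T hθ₁f
    have hb2 := hσ θ₂ hθ₂T hθ₂f
    set σ1 := A + ∑ i, (μ (D i)).toReal • f (θ₁ i) with hs1
    set σ2 := A + ∑ i, (μ (D i)).toReal • f (θ₂ i) with hs2
    have hdiff : σ1 - σ2 = ∑ i, (if ε i then (μ (D i)).toReal • (f (P.tag i) - f (τ' i))
        else -((μ (D i)).toReal • (f (P.tag i) - f (τ' i)))) := by
      rw [hs1, hs2, add_sub_add_left_eq_sub, ← Finset.sum_sub_distrib]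
      refine Finset.sum_congr rfl (fun i _ => ?_)
      rw [hθ₁, hθ₂]
      rcases Bool.eq_false_or_eq_true (ε i) with hε | hε <;>
        simp [hε, smul_sub, neg_sub]
    calc ∑ i, (if ε i then (μ (D i)).toReal • (f (P.tag i) - f (τ' i))
          else -((μ (D i)).toReal • (f (P.tag i) - f (τ' i))))
        = σ1 - σ2 := hdiff.symm
      _ = (σ1 - J) + (-(σ2 - J)) := by abel
      _ ≤ |σ1 - J| + |σ2 - J| := add_le_add (le_abs_self _) (neg_le_abs _)
      _ ≤ b + b := add_le_add hb1 hb2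
  exact sum_abs_le_of_signed Finset.univ _ _ key

end Constructions

end Aux

theorem oH_two_tag_henstock_lemma {T : Type*} [MetricSpace T] [CompactSpace T] [MeasurableSpace T] [BorelSpace T]
    (μ : Measure T) [IsFiniteMeasure μ] [μ.Regular]
    {X : Type*} [NormedAddCommGroup X] [Lattice X] [HasSolidNorm X] [IsOrderedAddMonoid X] [NormedSpace ℝ X] [CompleteSpace X]
    (hDC : ∀ s : Set X, s.Nonempty → BddAbove s → ∃ x, IsLUB s x) (f : T → X) (J : X)
    (hf : HasOHIntegralOn f μ Set.univ J) :
    ∃ b : ℕ → X, IsOSeq b ∧ ∃ γ : ℕ → T → ℝ, (∀ n, IsGage (γ n)) ∧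
      ∀ n (P : TaggedPart T (Set.univ : Set T)) (τ' : Fin P.k → T),
        P.IsFine (γ n) →
        (∀ i, ∀ w ∈ P.E i, dist w (τ' i) < γ n (τ' i)) →
        ∑ i, |(μ (P.E i)).toReal • f (P.tag i) - (μ (P.E i)).toReal • f (τ' i)| ≤ b n := by
  classical
  obtain ⟨b, hbseq, γ, hγ, hbound⟩ := hf
  refine ⟨fun n => 14 • b n, hbseq.nsmul 14, γ, hγ, ?_⟩
  intro n P τ' hfineτ hfineτ'
  have hb' : ∀ Q : TaggedPart T (Set.univ : Set T), Q.IsHenstock → Q.IsFine (γ n) →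
      |Q.sum f μ - J| ≤ b n := hbound n
  have hbn : 0 ≤ b n := oseq_nonneg hbseq n
  set Tags : Finset T := Finset.univ.image P.tag ∪ Finset.univ.image τ' with hTagsdef
  have hτT : ∀ i, P.tag i ∈ Tags := fun i =>
    Finset.mem_union.mpr (Or.inl (Finset.mem_image_of_mem _ (Finset.mem_univ i)))
  have hτ'T : ∀ i, τ' i ∈ Tags := fun i =>
    Finset.mem_union.mpr (Or.inr (Finset.mem_image_of_mem _ (Finset.mem_univ i)))
  have hexist : ∀ t : T, ∃ i, t ∈ P.E i := fun t =>
    Set.mem_iUnion.mp (by rw [P.cover]; exact Set.mem_univ t)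
  set idx : T → Fin P.k := fun t => (hexist t).choose with hidxdef
  have hidx : ∀ t, t ∈ P.E (idx t) := fun t => (hexist t).choose_spec
  have hidxu : ∀ t i, t ∈ P.E i → idx t = i := by
    intro t i hti
    by_contra hne
    exact Set.disjoint_left.mp (P.disj _ _ hne) (hidx t) hti
  set qτ : T → T := fun t => P.tag (idx t) with hqτdef
  set qτ' : T → T := fun t => τ' (idx t) with hqτ'def
  have hqτdist : ∀ t, dist t (qτ t) < γ n (qτ t) := fun t => hfineτ (idx t) t (hidx t)
  have hqτ'dist : ∀ t, dist t (qτ' t) < γ n (qτ' t) := fun t => hfineτ' (idx t) t (hidx t)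
  -- helper: subadditivity of nonneg sums under unions
  have union_le : ∀ (A B : Finset T) (g : T → X), (∀ t, 0 ≤ g t) →
      ∑ t ∈ A ∪ B, g t ≤ ∑ t ∈ A, g t + ∑ t ∈ B, g t := by
    intro A B g hg
    calc ∑ t ∈ A ∪ B, g t ≤ ∑ t ∈ A ∪ B, g t + ∑ t ∈ A ∩ B, g t :=
          le_add_of_nonneg_right (Finset.sum_nonneg (fun t _ => hg t))
      _ = ∑ t ∈ A, g t + ∑ t ∈ B, g t := Finset.sum_union_inter
  -- estimate along an auxiliary tag map q
  have bound_q : ∀ q : T → T, (∀ t, dist t (q t) < γ n (q t)) →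
      ∑ t ∈ Tags, |(μ {t}).toReal • (f (q t) - f t)| ≤ 6 • b n := by
    intro q hq
    set g : T → X := fun t => |(μ {t}).toReal • (f (q t) - f t)| with hgdef
    have hgpos : ∀ t, 0 ≤ g t := fun t => abs_nonneg _
    set S := Tags.filter (fun t => q t ≠ t) with hSdef
    have hzero : ∑ t ∈ Tags.filter (fun t => ¬ (q t ≠ t)), g t = 0 := by
      refine Finset.sum_eq_zero (fun t ht => ?_)
      have hqt : q t = t := not_not.mp (Finset.mem_filter.mp ht).2
      rw [hgdef]
      simp only [hqt, sub_self, smul_zero, abs_zero]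
    obtain ⟨S₁, S₂, S₃, hun, h1, h2, h3⟩ :=
      three_color q S (fun t ht => (Finset.mem_filter.mp ht).2)
    have hS₁T : S₁ ⊆ Tags := fun t ht => (Finset.mem_filter.mp (hun ▸
      (Finset.mem_union_left _ (Finset.mem_union_left _ ht)) : t ∈ S)).1
    have hS₂T : S₂ ⊆ Tags := fun t ht => (Finset.mem_filter.mp (hun ▸
      (Finset.mem_union_left _ (Finset.mem_union_right _ ht)) : t ∈ S)).1
    have hS₃T : S₃ ⊆ Tags := fun t ht => (Finset.mem_filter.mp (hun ▸
      (Finset.mem_union_right _ ht) : t ∈ S)).1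
    have pairs : ∀ (Sj : Finset T), Sj ⊆ Tags → (∀ t ∈ Sj, q t ∉ Sj) →
        ∑ t ∈ Sj, g t ≤ b n + b n := by
      intro Sj hsub hj
      exact pair_estimate (μ := μ) (f := f) (J := J) (γ := γ n) (hγ := hγ n)
        (b := b n) (hb := hb') hbn Sj q hj (fun t ht => hq t)
    calc ∑ t ∈ Tags, g t
        = ∑ t ∈ S, g t + ∑ t ∈ Tags.filter (fun t => ¬ (q t ≠ t)), g t :=
          (Finset.sum_filter_add_sum_filter_not Tags _ g).symm
      _ = ∑ t ∈ S, g t := by rw [hzero, add_zero]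
      _ = ∑ t ∈ S₁ ∪ S₂ ∪ S₃, g t := by rw [hun]
      _ ≤ ∑ t ∈ S₁ ∪ S₂, g t + ∑ t ∈ S₃, g t := union_le _ _ g hgpos
      _ ≤ (∑ t ∈ S₁, g t + ∑ t ∈ S₂, g t) + ∑ t ∈ S₃, g t :=
          add_le_add_left (union_le _ _ g hgpos) _
      _ ≤ ((b n + b n) + (b n + b n)) + (b n + b n) :=
          add_le_add (add_le_add (pairs S₁ hS₁T h1) (pairs S₂ hS₂T h2)) (pairs S₃ hS₃T h3)
      _ = 6 • b n := by abel
  -- the main (tag-set removed) estimate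
  have main := main_estimate (μ := μ) (f := f) (J := J) (γ := γ n) (hγ := hγ n)
    (b := b n) (hb := hb') P τ' hfineτ hfineτ' Tags hτT hτ'T
  -- the residual estimate
  have habs_sub : ∀ y z : X, |y - z| ≤ |y| + |z| := by
    intro y z
    rw [sub_eq_add_neg]
    exact (abs_add_le _ _).trans (by rw [abs_neg])
  have hfilfib : ∀ i : Fin P.k, Tags.filter (fun t => t ∈ P.E i)
      = Tags.filter (fun t => idx t = i) := by
    intro i
    ext t
    simp only [Finset.mem_filter, and_congr_right_iff]
    intro _
    exact ⟨fun h => hidxu t i h, fun h => h ▸ hidx t⟩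
  have resid : ∑ i, |(μ (P.E i ∩ ↑Tags)).toReal • (f (P.tag i) - f (τ' i))|
      ≤ 6 • b n + 6 • b n := by
    have hmeasint : ∀ i, (μ (P.E i ∩ ↑Tags)).toReal
        = ∑ t ∈ Tags.filter (fun t => t ∈ P.E i), (μ {t}).toReal := by
      intro i
      have hinter : P.E i ∩ ↑Tags = ↑(Tags.filter (fun t => t ∈ P.E i)) := by
        ext x
        simp only [Set.mem_inter_iff, Finset.coe_filter, Set.mem_setOf_eq, Finset.mem_coe]
        tauto
      rw [hinter, measure_finset_eq μ, ENNReal.toReal_sum (fun _ _ => measure_ne_top μ _)]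
    calc ∑ i, |(μ (P.E i ∩ ↑Tags)).toReal • (f (P.tag i) - f (τ' i))|
        = ∑ i, |∑ t ∈ Tags.filter (fun t => t ∈ P.E i),
            (μ {t}).toReal • (f (P.tag i) - f (τ' i))| := by
          refine Finset.sum_congr rfl (fun i _ => ?_)
          rw [hmeasint i, Finset.sum_smul]
      _ ≤ ∑ i, ∑ t ∈ Tags.filter (fun t => t ∈ P.E i),
            |(μ {t}).toReal • (f (P.tag i) - f (τ' i))| :=
          Finset.sum_le_sum (fun i _ => lat_abs_sum_le _ _)
      _ = ∑ i, ∑ t ∈ Tags.filter (fun t => idx t = i),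
            |(μ {t}).toReal • (f (qτ t) - f (qτ' t))| := by
          refine Finset.sum_congr rfl (fun i _ => ?_)
          rw [← hfilfib i]
          refine Finset.sum_congr rfl (fun t ht => ?_)
          have hti : idx t = i := hidxu t i (Finset.mem_filter.mp ht).2
          rw [hqτdef, hqτ'def]
          simp only [hti]
      _ = ∑ t ∈ Tags, |(μ {t}).toReal • (f (qτ t) - f (qτ' t))| := by
          exact Finset.sum_fiberwise_of_maps_to (s := Tags)
            (t := (Finset.univ : Finset (Fin P.k))) (g := idx)
            (fun t _ => Finset.mem_univ _) _
      _ ≤ ∑ t ∈ Tags, (|(μ {t}).toReal • (f (qτ t) - f t)|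
            + |(μ {t}).toReal • (f (qτ' t) - f t)|) := by
          refine Finset.sum_le_sum (fun t _ => ?_)
          have hdec : f (qτ t) - f (qτ' t) = (f (qτ t) - f t) - (f (qτ' t) - f t) := by abel
          rw [hdec, smul_sub]
          exact habs_sub _ _
      _ = ∑ t ∈ Tags, |(μ {t}).toReal • (f (qτ t) - f t)|
            + ∑ t ∈ Tags, |(μ {t}).toReal • (f (qτ' t) - f t)| := Finset.sum_add_distrib
      _ ≤ 6 • b n + 6 • b n := add_le_add (bound_q qτ hqτdist) (bound_q qτ' hqτ'dist)
  -- combine everything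
  have hdecomp : ∀ i, (μ (P.E i)).toReal
      = (μ (P.E i \ ↑Tags)).toReal + (μ (P.E i ∩ ↑Tags)).toReal := by
    intro i
    have h := measure_inter_add_diff (μ := μ) (P.E i) Tags.finite_toSet.measurableSet
    rw [← h, ENNReal.toReal_add (measure_ne_top μ _) (measure_ne_top μ _), add_comm]
  calc ∑ i, |(μ (P.E i)).toReal • f (P.tag i) - (μ (P.E i)).toReal • f (τ' i)|
      = ∑ i, |(μ (P.E i)).toReal • (f (P.tag i) - f (τ' i))| := by
        refine Finset.sum_congr rfl (fun i _ => ?_)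
        rw [smul_sub]
    _ ≤ ∑ i, (|(μ (P.E i \ ↑Tags)).toReal • (f (P.tag i) - f (τ' i))|
          + |(μ (P.E i ∩ ↑Tags)).toReal • (f (P.tag i) - f (τ' i))|) := by
        refine Finset.sum_le_sum (fun i _ => ?_)
        rw [hdecomp i, add_smul]
        exact abs_add_le _ _
    _ = ∑ i, |(μ (P.E i \ ↑Tags)).toReal • (f (P.tag i) - f (τ' i))|
          + ∑ i, |(μ (P.E i ∩ ↑Tags)).toReal • (f (P.tag i) - f (τ' i))| :=
        Finset.sum_add_distrib
    _ ≤ (b n + b n) + (6 • b n + 6 • b n) := add_le_add main resid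
    _ = 14 • b n := by abel
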